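/- (Strong Maximum Principle, possibly sign-changing zeroth order coefficient.) Let Ω ⊂ ℝⁿ be open and connected, let c : Ω → ℝ be continuous, and let u ∈ C²(Ω) satisfy Δu(x) + c(x)u(x) ≥ 0 and u(x) ≤ 0 for all x ∈ Ω. If u(x₀) = 0 for some x₀ ∈ Ω, then u ≡ 0 in Ω. -/

import Mathlib

open Metric Set Filter Topology

variable {E : Type*} [NormedAddCommGroup E] [NormedSpace ℝ E]

lemma line_hasDerivAt {F : Type*} [NormedAddCommGroup F] [NormedSpace ℝ F]
    {f : E → F} {x v : E} {t₀ : ℝ} (hf : DifferentiableAt ℝ f (x + t₀ • v)) :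
    HasDerivAt (fun t : ℝ => f (x + t • v)) (fderiv ℝ f (x + t₀ • v) v) t₀ := by
  have hline : HasDerivAt (fun t : ℝ => x + t • v) v t₀ := by
    simpa using ((hasDerivAt_id t₀).smul_const v).const_add x
  exact hf.hasFDerivAt.comp_hasDerivAt t₀ hline

lemma line_hasDerivAt_fderiv {f : E → ℝ} {s : Set E} (hs : IsOpen s)
    (hf : ContDiffOn ℝ 2 f s) {x v : E} {t₀ : ℝ} (hx : x + t₀ • v ∈ s) :
    HasDerivAt (fun t : ℝ => fderiv ℝ f (x + t • v) v)
      (fderiv ℝ (fderiv ℝ f) (x + t₀ • v) v v) t₀ := by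
  have hF : ContDiffOn ℝ 1 (fderiv ℝ f) s := hf.fderiv_of_isOpen hs (by norm_num)
  have hdF : DifferentiableAt ℝ (fderiv ℝ f) (x + t₀ • v) :=
    (hF.differentiableOn (by norm_num)).differentiableAt (hs.mem_nhds hx)
  have h1 : HasDerivAt (fun t : ℝ => fderiv ℝ f (x + t • v))
      (fderiv ℝ (fderiv ℝ f) (x + t₀ • v) v) t₀ := line_hasDerivAt hdF
  exact (ContinuousLinearMap.apply ℝ ℝ v).hasFDerivAt.comp_hasDerivAt t₀ h1

/-- Second derivative test: at an interior local max, diagonal second derivatives are ≤ 0. -/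
lemma secondDeriv_nonpos_of_isLocalMax {f : E → ℝ} {s : Set E} (hs : IsOpen s)
    (hf : ContDiffOn ℝ 2 f s) {p : E} (hp : p ∈ s) (hmax : IsLocalMax f p) (v : E) :
    fderiv ℝ (fderiv ℝ f) p v v ≤ 0 := by
  by_contra hpos
  push_neg at hpos
  set K := fderiv ℝ (fderiv ℝ f) p v v with hKdef
  -- derivative of G t = fderiv f (p + t v) v at 0 is K
  have hp0 : p + (0:ℝ) • v ∈ s := by simpa using hp
  have hG : HasDerivAt (fun t : ℝ => fderiv ℝ f (p + t • v) v) K 0 := by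
    have := line_hasDerivAt_fderiv hs hf (x := p) (v := v) (t₀ := 0) hp0
    simpa using this
  have hG0 : fderiv ℝ f (p + (0:ℝ) • v) v = 0 := by
    have : fderiv ℝ f p = 0 := hmax.fderiv_eq_zero
    simp [this]
  -- slope of G eventually > K/2
  have hs1 : ∀ᶠ t in 𝓝[≠] (0:ℝ), K/2 < slope (fun t : ℝ => fderiv ℝ f (p + t • v) v) 0 t :=
    (hasDerivAt_iff_tendsto_slope.1 hG).eventually (eventually_gt_nhds (by linarith))
  have hs1' : ∀ᶠ t in 𝓝 (0:ℝ), t ≠ 0 →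
      K/2 < slope (fun t : ℝ => fderiv ℝ f (p + t • v) v) 0 t := by
    rwa [eventually_nhdsWithin_iff] at hs1
  -- line stays in s, and local max condition
  have hcont : Continuous (fun t : ℝ => p + t • v) := by continuity
  have hs2 : ∀ᶠ t in 𝓝 (0:ℝ), p + t • v ∈ s := by
    have : Tendsto (fun t : ℝ => p + t • v) (𝓝 0) (𝓝 p) := by
      simpa using hcont.tendsto 0
    exact this.eventually (hs.mem_nhds hp)
  have hs3 : ∀ᶠ t in 𝓝 (0:ℝ), f (p + t • v) ≤ f p := by
    have : Tendsto (fun t : ℝ => p + t • v) (𝓝 0) (𝓝 p) := by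
      simpa using hcont.tendsto 0
    exact this.eventually hmax
  obtain ⟨δ, hδ, hδall⟩ := Metric.eventually_nhds_iff.1 ((hs1'.and hs2).and hs3)
  set T := δ/2 with hT
  have hTpos : 0 < T := by positivity
  have hmem : ∀ t ∈ Icc (0:ℝ) T, p + t • v ∈ s := by
    intro t ht
    have : dist t 0 < δ := by
      rw [Real.dist_eq, sub_zero, abs_of_nonneg ht.1]
      linarith [ht.2]
    exact ((hδall this).1).2
  -- g strictly increasing on [0, T]
  have hg : StrictMonoOn (fun t : ℝ => f (p + t • v)) (Icc 0 T) := by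
    apply strictMonoOn_of_deriv_pos (convex_Icc 0 T)
    · exact hf.continuousOn.comp hcont.continuousOn hmem
    · intro t ht
      rw [interior_Icc] at ht
      have htd : dist t 0 < δ := by
        rw [Real.dist_eq, sub_zero, abs_of_nonneg ht.1.le]
        linarith [ht.2]
      have hts : p + t • v ∈ s := ((hδall htd).1).2
      have hder : HasDerivAt (fun t : ℝ => f (p + t • v)) (fderiv ℝ f (p + t • v) v) t :=
        line_hasDerivAt ((hf.differentiableOn (by norm_num)).differentiableAt (hs.mem_nhds hts))
      rw [hder.deriv]
      have hsl := ((hδall htd).1).1 (ne_of_gt ht.1)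
      rw [slope_def_field] at hsl
      have h0 : fderiv ℝ f (p + (0:ℝ) • v) v = 0 := hG0
      simp only [zero_smul, add_zero] at h0
      simp only [zero_smul, add_zero] at hsl
      rw [h0, sub_zero, sub_zero] at hsl
      have h2 : K/2 * t < fderiv ℝ f (p + t • v) v := (lt_div_iff₀ ht.1).1 hsl
      nlinarith [ht.1, hpos]
  have hlt : f (p + (0:ℝ) • v) < f (p + T • v) :=
    hg (by constructor <;> simp [hTpos.le]) (by constructor <;> simp [hTpos.le]) hTpos
  have hTd : dist T 0 < δ := by
    rw [Real.dist_eq, sub_zero, abs_of_nonneg hTpos.le]; linarith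
  have := (hδall hTd).2
  simp only [zero_smul, add_zero] at hlt
  linarith


/-- If g has positive derivative at 0 but g ≤ g 0 on a right interval, contradiction. -/
lemma no_right_max_of_pos_deriv {g : ℝ → ℝ} {K T : ℝ} (h : HasDerivAt g K 0)
    (hK : 0 < K) (hT : 0 < T) (hle : ∀ t ∈ Set.Ioc (0:ℝ) T, g t ≤ g 0) : False := by
  have hs := hasDerivAt_iff_tendsto_slope.1 h
  have h1 : ∀ᶠ t in 𝓝[≠] (0:ℝ), 0 < slope g 0 t := hs.eventually (eventually_gt_nhds hK)
  have h2 : ∀ᶠ t in 𝓝[>] (0:ℝ), 0 < slope g 0 t :=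
    h1.filter_mono (nhdsWithin_mono 0 fun t ht => ne_of_gt ht)
  have h3 : ∀ᶠ t in 𝓝[>] (0:ℝ), t ∈ Set.Ioc (0:ℝ) T := Ioc_mem_nhdsGT_of_mem ⟨le_rfl, hT⟩
  obtain ⟨t, hslope, htIoc⟩ := (h2.and h3).exists
  have : 0 < (g t - g 0) / (t - 0) := by simpa [slope_def_field] using hslope
  have ht0 : 0 < t := htIoc.1
  have hgt : 0 < g t - g 0 := by
    have := (div_pos_iff.mp this)
    rcases this with ⟨a,b⟩|⟨a,b⟩
    · exact a
    · linarith
  linarith [hle t htIoc]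


variable {E : Type*} [NormedAddCommGroup E] [InnerProductSpace ℝ E]

local notation "⟪" x ", " y "⟫" => @inner ℝ _ _ x y

lemma barrier_contDiff (α : ℝ) (y : E) {n : ℕ∞} :
    ContDiff ℝ n (fun x : E => Real.exp (-α * ‖x - y‖^2)) := by
  apply Real.contDiff_exp.comp
  exact contDiff_const.mul ((contDiff_norm_sq ℝ).comp (contDiff_id.sub contDiff_const))

lemma poly_hasDerivAt (α Q b cc t : ℝ) :
    HasDerivAt (fun t : ℝ => Real.exp (-α * (Q + 2*b*t + cc*t^2)))
      (Real.exp (-α * (Q + 2*b*t + cc*t^2)) * (-α * (2*b + 2*cc*t))) t := by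
  have h1 : HasDerivAt (fun t : ℝ => -α * (Q + 2*b*t + cc*t^2)) (-α * (2*b + 2*cc*t)) t := by
    have : HasDerivAt (fun t : ℝ => Q + 2*b*t + cc*t^2) (2*b + 2*cc*t) t := by
      have ha : HasDerivAt (fun t : ℝ => Q + 2*b*t) (2*b) t := by
        simpa using ((hasDerivAt_id t).const_mul (2*b)).const_add Q
      have hb : HasDerivAt (fun t : ℝ => cc*t^2) (cc*(2*t)) t := by
        simpa using (hasDerivAt_pow 2 t).const_mul cc
      exact (ha.fun_add hb).congr_deriv (by ring)
    simpa using this.const_mul (-α)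
  exact h1.exp

lemma norm_line_sq (a v : E) (t : ℝ) :
    ‖a + t • v‖^2 = ‖a‖^2 + 2*⟪a, v⟫*t + ‖v‖^2*t^2 := by
  rw [norm_add_sq_real, real_inner_smul_right, norm_smul]
  simp [Real.norm_eq_abs, mul_pow, sq_abs]
  ring

lemma barrier_fderiv (α : ℝ) (y : E) (x v : E) :
    fderiv ℝ (fun x : E => Real.exp (-α * ‖x - y‖^2)) x v
      = Real.exp (-α * ‖x - y‖^2) * (-α * (2 * ⟪x - y, v⟫)) := by
  set w := fun x : E => Real.exp (-α * ‖x - y‖^2) with hw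
  have hd : DifferentiableAt ℝ w (x + (0:ℝ) • v) := by
    exact ((barrier_contDiff α y (n := 2)).differentiable (by norm_num)).differentiableAt
  have h1 : HasDerivAt (fun t : ℝ => w (x + t • v)) (fderiv ℝ w (x + (0:ℝ) • v) v) 0 :=
    line_hasDerivAt hd
  have heq : (fun t : ℝ => w (x + t • v))
      = fun t : ℝ => Real.exp (-α * (‖x - y‖^2 + 2*⟪x - y, v⟫*t + ‖v‖^2*t^2)) := by
    funext t
    have : x + t • v - y = (x - y) + t • v := by abel
    rw [hw]
    simp only [this, norm_line_sq]
  have h2 : HasDerivAt (fun t : ℝ => w (x + t • v))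
      (Real.exp (-α * ‖x - y‖^2) * (-α * (2 * ⟪x - y, v⟫))) 0 := by
    rw [heq]
    have := poly_hasDerivAt α (‖x - y‖^2) (⟪x - y, v⟫) (‖v‖^2) 0
    convert this using 2 <;> ring
  have := h1.unique h2
  simpa using this

lemma barrier_fderiv2 (α : ℝ) (y : E) (x v : E) :
    fderiv ℝ (fderiv ℝ (fun x : E => Real.exp (-α * ‖x - y‖^2))) x v v
      = Real.exp (-α * ‖x - y‖^2) * (4*α^2*⟪x - y, v⟫^2 - 2*α*‖v‖^2) := by
  set w := fun x : E => Real.exp (-α * ‖x - y‖^2) with hw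
  have hcd : ContDiffOn ℝ 2 w univ := (barrier_contDiff α y (n := 2)).contDiffOn
  have h1 : HasDerivAt (fun t : ℝ => fderiv ℝ w (x + t • v) v)
      (fderiv ℝ (fderiv ℝ w) (x + (0:ℝ) • v) v v) 0 :=
    line_hasDerivAt_fderiv isOpen_univ hcd (mem_univ _)
  set Q := ‖x - y‖^2
  set b := ⟪x - y, v⟫
  set cc := ‖v‖^2
  have heq : (fun t : ℝ => fderiv ℝ w (x + t • v) v)
      = fun t : ℝ => Real.exp (-α * (Q + 2*b*t + cc*t^2)) * (-α * (2*b + 2*cc*t)) := by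
    funext t
    have hx' : x + t • v - y = (x - y) + t • v := by abel
    rw [hw, barrier_fderiv α y (x + t • v) v, hx', norm_line_sq]
    have hinner : ⟪(x - y) + t • v, v⟫ = b + cc * t := by
      rw [inner_add_left, real_inner_smul_left, real_inner_self_eq_norm_sq]
      ring
    rw [hinner]
    simp only [Q, b, cc]
    ring_nf
  have h2 : HasDerivAt (fun t : ℝ => Real.exp (-α * (Q + 2*b*t + cc*t^2)) * (-α * (2*b + 2*cc*t)))
      (Real.exp (-α * Q) * (4*α^2*b^2 - 2*α*cc)) 0 := by
    have hlin : HasDerivAt (fun t : ℝ => -α * (2*b + 2*cc*t)) (-α * (2*cc)) 0 := by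
      simpa using (((hasDerivAt_id (0:ℝ)).const_mul (2*cc)).const_add (2*b)).const_mul (-α)
    have := (poly_hasDerivAt α Q b cc 0).fun_mul hlin
    exact this.congr_deriv (by ring_nf)
  have h3 : fderiv ℝ (fderiv ℝ w) (x + (0:ℝ) • v) v v = Real.exp (-α * Q) * (4*α^2*b^2 - 2*α*cc) := by
    apply HasDerivAt.unique _ h2
    rwa [heq] at h1
  simpa using h3

lemma fderiv2_add_mul {u w : E → ℝ} {s : Set E} (hs : IsOpen s) (hu : ContDiffOn ℝ 2 u s)
    (hw : ContDiff ℝ 2 w) {p : E} (hp : p ∈ s) (ε : ℝ) (a : E) :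
    fderiv ℝ (fderiv ℝ (fun x => u x + ε * w x)) p a a
      = fderiv ℝ (fderiv ℝ u) p a a + ε * fderiv ℝ (fderiv ℝ w) p a a := by
  have hud : ∀ x ∈ s, DifferentiableAt ℝ u x := fun x hx =>
    (hu.differentiableOn (by norm_num)).differentiableAt (hs.mem_nhds hx)
  have hwd : Differentiable ℝ w := hw.differentiable (by norm_num)
  have hev : (fun x => fderiv ℝ (fun x => u x + ε * w x) x)
      =ᶠ[𝓝 p] (fun x => fderiv ℝ u x + ε • fderiv ℝ w x) := by
    filter_upwards [hs.eventually_mem hp] with x hx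
    rw [fderiv_fun_add (hud x hx) ((hwd x).const_mul ε), fderiv_const_mul (hwd x)]
  have hdu2 : DifferentiableAt ℝ (fderiv ℝ u) p :=
    ((hu.fderiv_of_isOpen (m := 1) hs (by norm_num)).differentiableOn (by norm_num)).differentiableAt
      (hs.mem_nhds hp)
  have hdw2 : DifferentiableAt ℝ (fderiv ℝ w) p :=
    ((hw.fderiv_right (m := 1) (by norm_num)).differentiable (by norm_num)).differentiableAt
  rw [hev.fderiv_eq, fderiv_fun_add hdu2 (hdw2.fun_const_smul ε), fderiv_fun_const_smul hdw2]
  simp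

/-- The Laplacian `Δu(x) = ∑ ∂²u/∂xᵢ²` of a function on Euclidean space. -/
noncomputable def lapl {n : ℕ} (u : EuclideanSpace ℝ (Fin n) → ℝ)
    (x : EuclideanSpace ℝ (Fin n)) : ℝ :=
  ∑ i : Fin n,
    iteratedFDeriv ℝ 2 u x ![EuclideanSpace.single i 1, EuclideanSpace.single i 1]

lemma lapl_eq {n : ℕ} (f : EuclideanSpace ℝ (Fin n) → ℝ) (x : EuclideanSpace ℝ (Fin n)) :
    lapl f x = ∑ i : Fin n,
      fderiv ℝ (fderiv ℝ f) x (EuclideanSpace.single i 1) (EuclideanSpace.single i 1) := by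
  simp only [lapl, iteratedFDeriv_two_apply, Matrix.cons_val_zero, Matrix.cons_val_one,
    Matrix.head_cons]

lemma norm_sq_eq_sum {n : ℕ} (a : EuclideanSpace ℝ (Fin n)) : ‖a‖^2 = ∑ i, (a i)^2 := by
  rw [← real_inner_self_eq_norm_sq]
  simp only [PiLp.inner_apply, RCLike.inner_apply, conj_trivial, sq]

lemma lapl_barrier {n : ℕ} (α : ℝ) (y x : EuclideanSpace ℝ (Fin n)) :
    lapl (fun x => Real.exp (-α * ‖x - y‖^2)) x
      = Real.exp (-α * ‖x - y‖^2) * (4*α^2*‖x - y‖^2 - 2*α*n) := by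
  rw [lapl_eq]
  have h : ∀ i : Fin n,
      fderiv ℝ (fderiv ℝ (fun x : EuclideanSpace ℝ (Fin n) => Real.exp (-α * ‖x - y‖^2))) x
        (EuclideanSpace.single i 1) (EuclideanSpace.single i 1)
      = Real.exp (-α * ‖x - y‖^2) * (4*α^2*((x - y) i)^2 - 2*α) := by
    intro i
    rw [barrier_fderiv2 α y x (EuclideanSpace.single i 1)]
    have h1 : ⟪x - y, EuclideanSpace.single i (1:ℝ)⟫ = (x - y) i := by
      rw [EuclideanSpace.inner_single_right]; simp
    rw [h1, EuclideanSpace.norm_single]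
    norm_num
  simp only [h]
  rw [← Finset.mul_sum]
  congr 1
  rw [Finset.sum_sub_distrib, ← Finset.mul_sum, ← norm_sq_eq_sum]
  simp [Finset.card_univ]
  ring

lemma lapl_add_mul {n : ℕ} {u w : EuclideanSpace ℝ (Fin n) → ℝ}
    {s : Set (EuclideanSpace ℝ (Fin n))} (hs : IsOpen s) (hu : ContDiffOn ℝ 2 u s)
    (hw : ContDiff ℝ 2 w) {p : EuclideanSpace ℝ (Fin n)} (hp : p ∈ s) (ε : ℝ) :
    lapl (fun x => u x + ε * w x) p = lapl u p + ε * lapl w p := by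
  simp only [lapl_eq]
  rw [Finset.mul_sum, ← Finset.sum_add_distrib]
  exact Finset.sum_congr rfl fun i _ => fderiv2_add_mul hs hu hw hp ε _

lemma alpha_choice (ρ M N : ℝ) (hρ : 0 < ρ) (hM : 0 ≤ M) (hN : 0 ≤ N) :
    0 < ((2*N + M + 1) * (1/ρ + 1/ρ^2))^2 * ρ^2 - 2*((2*N + M + 1) * (1/ρ + 1/ρ^2))*N - M := by
  set s : ℝ := 1 + 1/ρ with hs
  have h1 : ((2*N + M + 1) * (1/ρ + 1/ρ^2)) * ρ = (2*N + M + 1) * s := by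
    rw [hs]; field_simp
  have hs1 : 1 ≤ s := by
    have : 0 < 1/ρ := by positivity
    simp [hs]; linarith
  have hr : 1/ρ + 1/ρ^2 = (s - 1) * s := by rw [hs]; field_simp; ring
  have expand : ((2*N + M + 1) * (1/ρ + 1/ρ^2))^2 * ρ^2 = ((2*N + M + 1) * s)^2 := by
    rw [← h1]; ring
  rw [expand, hr]
  have hid : ((2*N+M+1)*s)^2 - 2*((2*N+M+1)*((s-1)*s))*N
      = (M+1)*((2*N+M+1)*s^2) + 2*N*((2*N+M+1)*s) := by ring
  have hCs2 : 1 ≤ (2*N+M+1)*s^2 := by nlinarith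
  have h2 : (M+1)*1 ≤ (M+1)*((2*N+M+1)*s^2) := by
    apply mul_le_mul_of_nonneg_left hCs2 (by linarith)
  have h3 : 0 ≤ 2*N*((2*N+M+1)*s) := by positivity
  linarith

set_option maxHeartbeats 1000000 in
/-- Strong Maximum Principle, with a possibly sign-changing zeroth order coefficient. -/
theorem stmt_3 (n : ℕ) (hn : 2 ≤ n)
    (Ω : Set (EuclideanSpace ℝ (Fin n))) (hΩ : IsOpen Ω) (hconn : IsConnected Ω)
    (c : EuclideanSpace ℝ (Fin n) → ℝ) (hc : ContinuousOn c Ω)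
    (u : EuclideanSpace ℝ (Fin n) → ℝ) (hu : ContDiffOn ℝ 2 u Ω)
    (hineq : ∀ x ∈ Ω, 0 ≤ lapl u x + c x * u x)
    (hnonpos : ∀ x ∈ Ω, u x ≤ 0)
    (x₀ : EuclideanSpace ℝ (Fin n)) (hx₀ : x₀ ∈ Ω) (hux₀ : u x₀ = 0) :
    ∀ x ∈ Ω, u x = 0 := by
  classical
  by_contra hcon
  push_neg at hcon
  obtain ⟨x₁, hx₁Ω, hx₁⟩ := hcon
  have hx₁neg : u x₁ < 0 := lt_of_le_of_ne (hnonpos x₁ hx₁Ω) hx₁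
  -- modified zeroth order coefficient
  set c₀ : EuclideanSpace ℝ (Fin n) → ℝ := fun x => min (c x) 0 with hc₀def
  have hc₀nonpos : ∀ x, c₀ x ≤ 0 := fun x => min_le_right _ _
  have hc₀cont : ContinuousOn c₀ Ω :=
    ContinuousOn.inf hc continuousOn_const
  have hineq₀ : ∀ x ∈ Ω, 0 ≤ lapl u x + c₀ x * u x := by
    intro x hx
    have h1 := hineq x hx
    have hle1 : c₀ x - c x ≤ 0 := by simp [hc₀def, min_le_left]
    have h2 := mul_nonneg (neg_nonneg.2 hle1) (neg_nonneg.2 (hnonpos x hx))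
    nlinarith
  -- the zero set Z is not open
  set Z : Set (EuclideanSpace ℝ (Fin n)) := {x | x ∈ Ω ∧ u x = 0} with hZdef
  set W : Set (EuclideanSpace ℝ (Fin n)) := {x | x ∈ Ω ∧ u x < 0} with hWdef
  have hWopen : IsOpen W := by
    have : W = Ω ∩ u ⁻¹' (Iio 0) := by
      ext x; simp [hWdef, and_comm]
    rw [this]
    exact hu.continuousOn.isOpen_inter_preimage hΩ isOpen_Iio
  have hZW : ∀ x ∈ Ω, x ∈ Z ∨ x ∈ W := by
    intro x hx
    rcases lt_or_eq_of_le (hnonpos x hx) with h | h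
    · exact Or.inr ⟨hx, h⟩
    · exact Or.inl ⟨hx, h⟩
  have hZnotopen : ¬ IsOpen Z := by
    intro hZopen
    obtain ⟨q, hq⟩ := hconn.isPreconnected Z W hZopen hWopen
      (fun x hx => hZW x hx) ⟨x₀, hx₀, hx₀, hux₀⟩ ⟨x₁, hx₁Ω, hx₁Ω, hx₁neg⟩
    exact absurd hq.2.1.2 (ne_of_gt hq.2.2.2).symm
  -- a boundary zero point z of Z, with room
  rw [isOpen_iff_mem_nhds] at hZnotopen
  push_neg at hZnotopen
  obtain ⟨z, hzZ, hznb⟩ := hZnotopen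
  obtain ⟨R2, hR2pos, hR2⟩ := Metric.mem_nhds_iff.1 (hΩ.mem_nhds hzZ.1)
  set R : ℝ := R2 / 3 with hRdef
  have hRpos : 0 < R := by positivity
  have hball2R : closedBall z (2*R) ⊆ Ω := by
    intro x hx
    apply hR2
    rw [mem_closedBall] at hx
    rw [mem_ball]
    have : (2:ℝ)*R < R2 := by rw [hRdef]; linarith
    linarith
  -- find y near z with u y < 0
  have hy : ∃ y ∈ ball z (R/2), y ∉ Z := by
    by_contra hcontra
    push_neg at hcontra
    exact hznb (Filter.mem_of_superset (ball_mem_nhds z (by positivity)) hcontra)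
  obtain ⟨y, hyball, hyZ⟩ := hy
  have hyz : dist y z < R/2 := mem_ball.1 hyball
  have hyΩ : y ∈ Ω := hball2R (by rw [mem_closedBall]; nlinarith)
  have hyneg : u y < 0 := by
    rcases hZW y hyΩ with h | h
    · exact absurd h hyZ
    · exact h.2
  -- compact piece of the zero set
  set K₀ : Set (EuclideanSpace ℝ (Fin n)) :=
    (closedBall z (2*R) ∩ u ⁻¹' {0}) ∩ closedBall z R with hK₀def
  have hK₀closed : IsClosed K₀ := by
    apply IsClosed.inter _ Metric.isClosed_closedBall
    exact (hu.continuousOn.mono (fun x hx => hball2R hx)).preimage_isClosed_of_isClosed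
      Metric.isClosed_closedBall isClosed_singleton
  have hzK₀ : z ∈ K₀ := by
    refine ⟨⟨?_, hzZ.2⟩, ?_⟩ <;> · rw [mem_closedBall, dist_self]; positivity
  obtain ⟨xs, hxsK₀, hρeq⟩ := hK₀closed.exists_infDist_eq_dist ⟨z, hzK₀⟩ y
  set ρ : ℝ := Metric.infDist y K₀ with hρdef
  have hxsΩ : xs ∈ Ω := hball2R (by
    have h1 := mem_closedBall.1 hxsK₀.2
    rw [mem_closedBall]
    nlinarith)
  have huxs : u xs = 0 := by
    have := hxsK₀.1.2
    simpa using this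
  have hρlt : ρ < R/2 :=
    lt_of_le_of_lt (Metric.infDist_le_dist_of_mem hzK₀) hyz
  have hρpos : 0 < ρ := by
    rw [hρeq, dist_pos]
    intro h
    rw [h, huxs] at hyneg
    exact lt_irrefl 0 hyneg
  have hdistxs : dist xs y = ρ := by rw [hρeq, dist_comm]
  -- the closed ball around y lies in Ω, the open ball in the negativity set
  have hballΩ : closedBall y ρ ⊆ Ω := by
    intro x hx
    apply hball2R
    rw [mem_closedBall] at hx ⊢
    have h1 : dist x z ≤ dist x y + dist y z := dist_triangle x y z
    nlinarith
  have hballneg : ∀ x ∈ ball y ρ, u x < 0 := by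
    intro x hx
    have hxy : dist x y < ρ := mem_ball.1 hx
    have hxΩ : x ∈ Ω := hballΩ (ball_subset_closedBall hx)
    rcases hZW x hxΩ with h | h
    · exfalso
      have hxz : dist x z ≤ dist x y + dist y z := dist_triangle x y z
      have hxK₀ : x ∈ K₀ := by
        refine ⟨⟨?_, by simp [h.2]⟩, ?_⟩ <;> · rw [mem_closedBall]; nlinarith
      have h2 : Metric.infDist y K₀ ≤ dist y x := Metric.infDist_le_dist_of_mem hxK₀
      rw [dist_comm] at hxy
      linarith
    · exact h.2
  -- interior local max of u at xs
  have huxsmax : IsLocalMax u xs := by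
    filter_upwards [hΩ.mem_nhds hxsΩ] with x hx
    rw [huxs]
    exact hnonpos x hx
  -- bound on c₀
  obtain ⟨M, hM⟩ := (isCompact_closedBall y ρ).exists_bound_of_continuousOn
    (hc₀cont.mono hballΩ)
  have hMnonneg : 0 ≤ M :=
    le_trans (norm_nonneg _) (hM y (mem_closedBall_self hρpos.le))
  -- choice of α
  set α : ℝ := (2*(n:ℝ) + M + 1) * (1/ρ + 1/ρ^2) with hαdef
  have hαpos : 0 < α := by
    have hnn : (0:ℝ) ≤ (n:ℝ) := Nat.cast_nonneg n
    rw [hαdef]; positivity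
  have hαkey : 0 < α^2*ρ^2 - 2*α*(n:ℝ) - M :=
    alpha_choice ρ M (n:ℝ) hρpos hMnonneg (Nat.cast_nonneg n)
  -- the barrier
  set w : EuclideanSpace ℝ (Fin n) → ℝ := fun x => Real.exp (-α * ‖x - y‖^2) with hwdef
  have hwcd : ContDiff ℝ 2 w := barrier_contDiff α y
  have hwpos : ∀ x, 0 < w x := fun x => Real.exp_pos _
  have hwle1 : ∀ x, w x ≤ 1 := by
    intro x
    rw [hwdef]
    apply Real.exp_le_one_iff.2
    have : (0:ℝ) ≤ ‖x - y‖^2 := sq_nonneg _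
    nlinarith
  set C : ℝ := Real.exp (-α * ρ^2) with hCdef
  have hCpos : 0 < C := Real.exp_pos _
  have hwxs : w xs = C := by
    rw [hwdef, hCdef, ← hdistxs, dist_eq_norm]
  -- the inner sphere and the choice of ε
  have hmid : ∀ t : ℝ, xs + t • (y - xs) - y = (1 - t) • (xs - y) := by
    intro t
    rw [smul_sub, sub_smul, one_smul, smul_sub]
    abel
  have hdistline : ∀ t : ℝ, 0 ≤ t → t ≤ 1 → dist (xs + t • (y - xs)) y = (1 - t) * ρ := by
    intro t ht0 ht1
    rw [dist_eq_norm, hmid t, norm_smul, Real.norm_eq_abs, abs_of_nonneg (by linarith)]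
    rw [← dist_eq_norm, hdistxs]
  have hSne : (sphere y (ρ/2)).Nonempty := by
    refine ⟨xs + (2⁻¹:ℝ) • (y - xs), ?_⟩
    rw [mem_sphere, hdistline 2⁻¹ (by norm_num) (by norm_num)]
    ring
  have hsphsub : sphere y (ρ/2) ⊆ Ω := by
    intro x hx
    apply hballΩ
    rw [mem_closedBall]
    have := mem_sphere.1 hx
    linarith
  obtain ⟨m, hmS, hmmax⟩ := (isCompact_sphere y (ρ/2)).exists_isMaxOn hSne
    (hu.continuousOn.mono hsphsub)
  have hmneg : u m < 0 := by
    apply hballneg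
    rw [mem_ball, mem_sphere.1 hmS]
    linarith
  set ε : ℝ := -u m with hεdef
  have hεpos : 0 < ε := by rw [hεdef]; linarith
  -- the comparison function v
  set v : EuclideanSpace ℝ (Fin n) → ℝ := fun x => u x + ε * w x with hvdef
  clear_value R ρ α ε C v
  have hvcd : ContDiffOn ℝ 2 v Ω := by
    rw [hvdef]
    exact hu.add ((contDiff_const.mul hwcd).contDiffOn)
  have hvxs : v xs = ε * C := by rw [hvdef]; simp [huxs, hwxs]
  -- the closed annulus
  set A : Set (EuclideanSpace ℝ (Fin n)) := closedBall y ρ \ ball y (ρ/2) with hAdef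
  have hAcpt : IsCompact A := (isCompact_closedBall y ρ).diff isOpen_ball
  have hAsub : A ⊆ Ω := fun x hx => hballΩ hx.1
  have hxsA : xs ∈ A := by
    constructor
    · rw [mem_closedBall, hdistxs]
    · rw [mem_ball, hdistxs]
      intro h
      linarith
  -- v ≤ ε * C on the annulus
  obtain ⟨p, hpA, hpmax⟩ := hAcpt.exists_isMaxOn ⟨xs, hxsA⟩
    (hvcd.continuousOn.mono hAsub)
  have hvle : ∀ x ∈ A, v x ≤ ε * C := by
    have hple : v p ≤ ε * C := by
      rcases lt_or_ge (dist p y) ρ with hlt | hge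
      · rcases lt_or_ge (ρ/2) (dist p y) with hgt | hle2
        · -- interior point: contradiction with the strict subsolution property
          exfalso
          have hpΩ : p ∈ Ω := hAsub hpA
          have hpopen : {x | ρ/2 < dist x y ∧ dist x y < ρ} ∈ 𝓝 p := by
            refine IsOpen.mem_nhds ?_ ⟨hgt, hlt⟩
            have : {x : EuclideanSpace ℝ (Fin n) | ρ/2 < dist x y ∧ dist x y < ρ}
                = ball y ρ ∩ (closedBall y (ρ/2))ᶜ := by
              ext x
              simp only [mem_inter_iff, mem_ball, mem_compl_iff, mem_closedBall, mem_setOf_eq]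
              constructor
              · rintro ⟨h1, h2⟩; exact ⟨h2, by linarith⟩
              · rintro ⟨h1, h2⟩; constructor <;> [linarith [lt_of_not_ge h2]; exact h1]
            rw [this]
            exact isOpen_ball.inter (isClosed_closedBall (x := y) (ε := ρ/2)).isOpen_compl
          have hploc : IsLocalMax v p := by
            apply hpmax.isLocalMax
            filter_upwards [hpopen] with x hx
            exact ⟨mem_closedBall.2 hx.2.le, by rw [mem_ball]; intro h; linarith [hx.1]⟩
          -- second derivative test
          have hlaplv : lapl v p ≤ 0 := by
            rw [lapl_eq]
            apply Finset.sum_nonpos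
            intro i _
            exact secondDeriv_nonpos_of_isLocalMax hΩ hvcd hpΩ hploc _
          -- value bound
          have hvp : ε * C ≤ v p := by
            have h5 := (isMaxOn_iff.1 hpmax) xs hxsA
            rw [hvxs] at h5
            exact h5
          have hvppos : 0 < v p := lt_of_lt_of_le (by positivity) hvp
          have hc₀vp : c₀ p * v p ≤ 0 :=
            mul_nonpos_of_nonpos_of_nonneg (hc₀nonpos p) hvppos.le
          -- strict subsolution property of v at p
          have hlaplw : lapl w p = Real.exp (-α * ‖p - y‖^2) * (4*α^2*‖p - y‖^2 - 2*α*n) := by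
            have h9 := lapl_barrier α y p
            rw [← hwdef] at h9
            exact h9
          have hnormp : ‖p - y‖ = dist p y := (dist_eq_norm p y).symm
          have hbar : 0 < lapl w p + c₀ p * w p := by
            have hMp : -M ≤ c₀ p := by
              have := hM p (mem_closedBall.2 hlt.le)
              rw [Real.norm_eq_abs] at this
              linarith [abs_le.1 this |>.1]
            have hwp : w p = Real.exp (-α * ‖p - y‖^2) := by rw [hwdef]
            have hcw : -M * w p ≤ c₀ p * w p :=
              mul_le_mul_of_nonneg_right hMp (hwpos p).le
            rw [hlaplw, hwp]
            have hd2 : ρ^2/4 ≤ ‖p - y‖^2 := by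
              rw [hnormp]
              nlinarith [hgt, dist_nonneg (x := p) (y := y)]
            have hexp : 0 < Real.exp (-α * ‖p - y‖^2) := Real.exp_pos _
            have h4 : 0 < 4*α^2*‖p - y‖^2 - 2*α*(n:ℝ) - M := by
              nlinarith [sq_nonneg α, hd2, hαkey]
            rw [hwp] at hcw
            nlinarith [mul_pos hexp h4]
          have hlaplvp : lapl v p = lapl u p + ε * lapl w p := by
            rw [hvdef]
            exact lapl_add_mul hΩ hu hwcd hpΩ ε
          have hup := hineq₀ p hpΩ
          have hwc : c₀ p * v p = c₀ p * u p + ε * (c₀ p * w p) := by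
            simp only [hvdef]; ring
          have h6 : 0 < ε * (lapl w p + c₀ p * w p) := mul_pos hεpos hbar
          have h7 : ε * (lapl w p + c₀ p * w p) = ε * lapl w p + ε * (c₀ p * w p) := by ring
          linarith
        · -- inner boundary
          have hge2 : ρ/2 ≤ dist p y := not_lt.1 (fun h => hpA.2 (mem_ball.2 h))
          have hpd : dist p y = ρ/2 := le_antisymm hle2 hge2
          have hpS : p ∈ sphere y (ρ/2) := mem_sphere.2 hpd
          have hup2 : u p ≤ -ε := by
            have h3 := (isMaxOn_iff.1 hmmax) p hpS
            rw [hεdef]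
            linarith
          have h4 : v p = u p + ε * w p := by simp only [hvdef]
          have h5 : ε * w p ≤ ε * 1 := mul_le_mul_of_nonneg_left (hwle1 p) hεpos.le
          linarith [mul_pos hεpos hCpos]
      · -- outer boundary
        have hpd : dist p y = ρ := le_antisymm (mem_closedBall.1 hpA.1) hge
        have hwp : w p = C := by
          rw [hwdef, hCdef, ← hpd, dist_eq_norm]
        have hupΩ : u p ≤ 0 := hnonpos p (hAsub hpA)
        have h4 : v p = u p + ε * w p := by simp only [hvdef]
        rw [h4, hwp]
        linarith
    intro x hx
    exact le_trans ((isMaxOn_iff.1 hpmax) x hx) hple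
  -- the ray from xs towards y
  have hudiff : DifferentiableAt ℝ u xs :=
    (hu.differentiableOn (by norm_num)).differentiableAt (hΩ.mem_nhds hxsΩ)
  have hwdiff : DifferentiableAt ℝ w xs := (hwcd.differentiable (by norm_num)).differentiableAt
  have hvdiff : DifferentiableAt ℝ v xs := by
    rw [hvdef]
    exact hudiff.add (hwdiff.const_mul ε)
  have hfu0 : fderiv ℝ u xs = 0 := huxsmax.fderiv_eq_zero
  have hfw : fderiv ℝ w xs (y - xs) = Real.exp (-α * ρ^2) * (2 * α * ρ^2) := by
    rw [hwdef, barrier_fderiv α y xs (y - xs)]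
    have h1 : @inner ℝ _ _ (xs - y) (y - xs) = -ρ^2 := by
      have : y - xs = -(xs - y) := by abel
      rw [this, inner_neg_right, real_inner_self_eq_norm_sq, ← dist_eq_norm, hdistxs]
    rw [h1, ← dist_eq_norm, hdistxs]
    ring
  have hfv : fderiv ℝ v xs (y - xs) = ε * (Real.exp (-α * ρ^2) * (2 * α * ρ^2)) := by
    rw [hvdef]
    rw [fderiv_fun_add hudiff (hwdiff.const_mul ε), fderiv_const_mul hwdiff]
    simp [hfu0, hfw]
  -- derivative of v along the ray
  have hg : HasDerivAt (fun t : ℝ => v (xs + t • (y - xs)))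
      (ε * (Real.exp (-α * ρ^2) * (2 * α * ρ^2))) 0 := by
    have := line_hasDerivAt (f := v) (x := xs) (v := y - xs) (t₀ := 0)
      (by simpa using hvdiff)
    rw [← hfv]
    simpa using this
  have hKpos : 0 < ε * (Real.exp (-α * ρ^2) * (2 * α * ρ^2)) := by
    have := Real.exp_pos (-α * ρ^2)
    positivity
  -- but v(ray) ≤ v xs for small positive t
  apply no_right_max_of_pos_deriv hg hKpos (by norm_num : (0:ℝ) < 1/2)
  intro t ht
  have hq : xs + t • (y - xs) ∈ A := by
    have hd := hdistline t ht.1.le (by linarith [ht.2])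
    constructor
    · rw [mem_closedBall, hd]
      nlinarith [ht.1]
    · rw [mem_ball, hd]
      intro h
      nlinarith [ht.2, ht.1]
  have h1 := hvle _ hq
  have h2 : v (xs + (0:ℝ) • (y - xs)) = ε * C := by simpa using hvxs
  rw [h2]
  exact h1
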